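/- Let f : ℝ → ℂ be continuously differentiable with f(x) → 1 as |x| → ∞, satisfying |1 − f(x)| ≤ 1 for all x ∈ ℝ, and such that f − 1 ∈ L²(ℝ) and f²·f′ ∈ L²(ℝ). Then sup_{x∈ℝ} |f(x) − 1|² ≤ 36 · ‖f − 1‖_{L²(ℝ)} · ‖f²f′‖_{L²(ℝ)}. -/

import Mathlib

open MeasureTheory Filter

private lemma cs_integral (u v : ℝ → ℝ) (hu : MemLp u 2 volume) (hv : MemLp v 2 volume) :
    ∫ x, u x * v x ≤ (eLpNorm u 2 volume).toReal * (eLpNorm v 2 volume).toReal := by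
  set U : Lp ℝ 2 volume := hu.toLp u with hU
  set V : Lp ℝ 2 volume := hv.toLp v with hV
  have h1 : ∫ x, u x * v x = inner (𝕜 := ℝ) U V := by
    rw [L2.inner_def]
    refine integral_congr_ae ?_
    filter_upwards [hu.coeFn_toLp, hv.coeFn_toLp] with x hx hy
    simp [hU, hV, hx, hy, RCLike.inner_apply, mul_comm]
  rw [h1]
  calc inner (𝕜 := ℝ) U V ≤ ‖U‖ * ‖V‖ := real_inner_le_norm U V
    _ = _ := by rw [hU, hV, Lp.norm_toLp, Lp.norm_toLp]

private lemma cs_integrable (u v : ℝ → ℝ) (hu : MemLp u 2 volume) (hv : MemLp v 2 volume) :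
    Integrable (fun x => u x * v x) volume := by
  have h := L2.integrable_inner (𝕜 := ℝ) (hu.toLp u) (hv.toLp v)
  refine h.congr ?_
  filter_upwards [hu.coeFn_toLp, hv.coeFn_toLp] with x hx hy
  simp [hx, hy, RCLike.inner_apply, mul_comm]

theorem sobolev_type_estimate (f : ℝ → ℂ)
    (hf : ContDiff ℝ 1 f)
    (hlim : Tendsto f (cocompact ℝ) (nhds 1))
    (hbd : ∀ x : ℝ, ‖1 - f x‖ ≤ 1)
    (hL2 : MemLp (fun x => f x - 1) 2 volume)
    (hL2' : MemLp (fun x => f x ^ 2 * deriv f x) 2 volume) :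
    ∀ x : ℝ, ‖f x - 1‖ ^ 2 ≤
      36 * (eLpNorm (fun x => f x - 1) 2 volume).toReal *
        (eLpNorm (fun x => f x ^ 2 * deriv f x) 2 volume).toReal := by
  intro x₀
  set g : ℝ → ℂ := fun x => f x - 1 with hg
  set u : ℝ → ℂ := fun x => f x ^ 3 - 1 with hu_def
  set v : ℝ → ℂ := fun x => 3 * (f x ^ 2 * deriv f x) with hv_def
  set φ : ℝ → ℝ := fun x => Complex.normSq (u x) with hφ_def
  set φ' : ℝ → ℝ := fun x => 2 * ((u x).re * (v x).re + (u x).im * (v x).im) with hφ'_def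
  set A := (eLpNorm (fun x => f x - 1) 2 volume).toReal with hA
  set B := (eLpNorm (fun x => f x ^ 2 * deriv f x) 2 volume).toReal with hB
  have hA0 : 0 ≤ A := ENNReal.toReal_nonneg
  have hB0 : 0 ≤ B := ENNReal.toReal_nonneg
  -- derivatives
  have hu : ∀ x, HasDerivAt u (v x) x := by
    intro x
    have h := (hf.differentiable one_ne_zero x).hasDerivAt
    have h3 := ((h.mul (h.mul h)).sub_const 1)
    simp only [hu_def, pow_three]
    refine h3.congr_deriv ?_
    rw [hv_def, Pi.mul_apply]; ring
  have hφ : ∀ x, HasDerivAt φ (φ' x) x := by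
    intro x
    have hre : HasDerivAt (fun y => (u y).re) ((v x).re) x :=
      (Complex.reCLM.hasFDerivAt.comp_hasDerivAt x (hu x))
    have him : HasDerivAt (fun y => (u y).im) ((v x).im) x :=
      (Complex.imCLM.hasFDerivAt.comp_hasDerivAt x (hu x))
    have h2 := (hre.mul hre).add (him.mul him)
    simp only [hφ_def, Complex.normSq_apply]
    refine h2.congr_deriv ?_
    rw [hφ'_def]; ring
  -- pointwise norm bounds
  have hfb : ∀ x, ‖f x‖ ≤ 2 := by
    intro x
    calc ‖f x‖ = ‖1 - (1 - f x)‖ := by ring_nf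
      _ ≤ ‖(1:ℂ)‖ + ‖1 - f x‖ := norm_sub_le _ _
      _ ≤ 1 + 1 := by simpa using hbd x
      _ = 2 := by norm_num
  have hufac : ∀ x, u x = g x * (f x ^ 2 + f x + 1) := by
    intro x; simp only [hu_def, hg]; ring
  have hq_upper : ∀ x, ‖f x ^ 2 + f x + 1‖ ≤ 7 := by
    intro x
    calc ‖f x ^ 2 + f x + 1‖ ≤ ‖f x ^ 2 + f x‖ + ‖(1:ℂ)‖ := norm_add_le _ _
      _ ≤ ‖f x ^ 2‖ + ‖f x‖ + ‖(1:ℂ)‖ := by gcongr; exact norm_add_le _ _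
      _ = ‖f x‖ ^ 2 + ‖f x‖ + 1 := by rw [norm_pow]; simp
      _ ≤ 2 ^ 2 + 2 + 1 := by gcongr <;> [exact hfb x; exact hfb x]
      _ = 7 := by norm_num
  have hq_lower : ∀ x, (7:ℝ)/8 ≤ ‖f x ^ 2 + f x + 1‖ := by
    intro x
    set z := f x with hz
    have hb : ‖1 - z‖ ≤ 1 := hbd x
    have hb2 : (1 - z.re) ^ 2 + z.im ^ 2 ≤ 1 := by
      have : ‖1 - z‖ ^ 2 ≤ 1 := by nlinarith [norm_nonneg (1 - z)]
      calc (1 - z.re) ^ 2 + z.im ^ 2 = ‖1 - z‖ ^ 2 := by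
            rw [Complex.sq_norm, Complex.normSq_apply]
            simp [Complex.sub_re, Complex.sub_im]
            ring
        _ ≤ 1 := this
    have hre : (7:ℝ)/8 ≤ (z ^ 2 + z + 1).re := by
      have : (z ^ 2 + z + 1).re = z.re ^ 2 - z.im ^ 2 + z.re + 1 := by
        simp only [pow_two, Complex.add_re, Complex.mul_re, Complex.one_re]
      rw [this]
      nlinarith [sq_nonneg (z.re - 1/4)]
    calc (7:ℝ)/8 ≤ (z ^ 2 + z + 1).re := hre
      _ ≤ ‖z ^ 2 + z + 1‖ := Complex.re_le_norm _
  -- continuity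
  have hfc : Continuous f := hf.continuous
  have hdc : Continuous (deriv f) := hf.continuous_deriv le_rfl
  have huc : Continuous u := by
    rw [hu_def]; exact (hfc.pow 3).sub continuous_const
  have hvc : Continuous v := by
    rw [hv_def]; exact continuous_const.mul ((hfc.pow 2).mul hdc)
  have hgc : Continuous g := by rw [hg]; exact hfc.sub continuous_const
  -- pointwise norm comparison for u
  have hug : ∀ x, ‖u x‖ ≤ 7 * ‖g x‖ := by
    intro x
    rw [hufac x, norm_mul, mul_comm]
    exact mul_le_mul_of_nonneg_right (hq_upper x) (norm_nonneg _)
  -- Memℒp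
  have hUmem : MemLp u 2 volume :=
    MemLp.of_le_mul hL2 huc.aestronglyMeasurable (Eventually.of_forall hug)
  have hVmem : MemLp v 2 volume := hL2'.const_mul (3:ℂ)
  have hNU : MemLp (fun x => ‖u x‖) 2 volume := hUmem.norm
  have hNV : MemLp (fun x => ‖v x‖) 2 volume := hVmem.norm
  -- integrability of ‖u‖‖v‖ and of φ'
  have hInt2 : Integrable (fun x => ‖u x‖ * ‖v x‖) volume := cs_integrable _ _ hNU hNV
  have hφ'bd : ∀ x, |φ' x| ≤ 2 * (‖u x‖ * ‖v x‖) := by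
    intro x
    have key : ((starRingEnd ℂ) (u x) * v x).re = (u x).re * (v x).re + (u x).im * (v x).im := by
      simp [Complex.mul_re, Complex.conj_re, Complex.conj_im]
    have h1 : |(u x).re * (v x).re + (u x).im * (v x).im| ≤ ‖u x‖ * ‖v x‖ := by
      rw [← key]
      calc |((starRingEnd ℂ) (u x) * v x).re| ≤ ‖(starRingEnd ℂ) (u x) * v x‖ :=
            Complex.abs_re_le_norm _
        _ = ‖u x‖ * ‖v x‖ := by rw [norm_mul, RCLike.norm_conj]
    calc |φ' x| = 2 * |(u x).re * (v x).re + (u x).im * (v x).im| := by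
          rw [hφ'_def, abs_mul]; norm_num
      _ ≤ 2 * (‖u x‖ * ‖v x‖) := by linarith
  have hφ'c : Continuous φ' := by
    rw [hφ'_def]
    fun_prop
  have hInt : Integrable φ' volume := by
    refine Integrable.mono' (hInt2.const_mul 2) hφ'c.aestronglyMeasurable ?_
    exact Eventually.of_forall fun x => by simpa [Real.norm_eq_abs] using hφ'bd x
  -- limits at infinity
  have hcc := hlim
  rw [cocompact_eq_atBot_atTop] at hcc
  have htop : Tendsto φ atTop (nhds 0) := by
    have h1 : Tendsto f atTop (nhds 1) := hcc.mono_left le_sup_right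
    have h2 : Tendsto u atTop (nhds 0) := by
      rw [hu_def]; simpa using (h1.pow 3).sub_const 1
    simpa [hφ_def, Function.comp_def] using (Complex.continuous_normSq.tendsto 0).comp h2
  have hbot : Tendsto φ atBot (nhds 0) := by
    have h1 : Tendsto f atBot (nhds 1) := hcc.mono_left le_sup_left
    have h2 : Tendsto u atBot (nhds 0) := by
      rw [hu_def]; simpa using (h1.pow 3).sub_const 1
    simpa [hφ_def, Function.comp_def] using (Complex.continuous_normSq.tendsto 0).comp h2
  -- FTC
  have hIoi : ∫ t in Set.Ioi x₀, φ' t = 0 - φ x₀ :=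
    integral_Ioi_of_hasDerivAt_of_tendsto' (fun t _ => hφ t) hInt.integrableOn htop
  have hIic : ∫ t in Set.Iic x₀, φ' t = φ x₀ - 0 :=
    integral_Iic_of_hasDerivAt_of_tendsto' (fun t _ => hφ t) hInt.integrableOn hbot
  -- main integral bound: 2 φ x₀ ≤ ∫ |φ'|
  have habs : Integrable (fun x => |φ' x|) volume := hInt.abs
  have hb1 : φ x₀ ≤ ∫ t in Set.Iic x₀, |φ' t| := by
    have := norm_integral_le_integral_norm (μ := volume.restrict (Set.Iic x₀)) φ'
    rw [hIic] at this
    simp only [sub_zero, Real.norm_eq_abs] at this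
    exact le_trans (le_abs_self _) this
  have hb2 : φ x₀ ≤ ∫ t in Set.Ioi x₀, |φ' t| := by
    have := norm_integral_le_integral_norm (μ := volume.restrict (Set.Ioi x₀)) φ'
    rw [hIoi] at this
    simp only [zero_sub, Real.norm_eq_abs, abs_neg] at this
    exact le_trans (le_abs_self _) this
  have hsplit : (∫ t in Set.Iic x₀, |φ' t|) + ∫ t in Set.Ioi x₀, |φ' t| = ∫ t, |φ' t| := by
    have := integral_add_compl (measurableSet_Iic (a := x₀)) habs
    rwa [Set.compl_Iic] at this
  have hmain : 2 * φ x₀ ≤ ∫ t, |φ' t| := by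
    rw [← hsplit]; linarith
  -- bound ∫|φ'| by 2 ∫ ‖u‖‖v‖ and Cauchy-Schwarz
  have hstep : ∫ t, |φ' t| ≤ 2 * ∫ t, ‖u t‖ * ‖v t‖ := by
    rw [← integral_const_mul]
    exact integral_mono habs (hInt2.const_mul 2) fun t => hφ'bd t
  have hCS : ∫ t, ‖u t‖ * ‖v t‖ ≤
      (eLpNorm u 2 volume).toReal * (eLpNorm v 2 volume).toReal := by
    have h := cs_integral _ _ hNU hNV
    rwa [eLpNorm_norm, eLpNorm_norm] at h
  -- norm comparisons in L²
  have hUA : (eLpNorm u 2 volume).toReal ≤ 7 * A := by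
    have h1 : eLpNorm u 2 volume ≤ ENNReal.ofReal 7 * eLpNorm g 2 volume :=
      eLpNorm_le_mul_eLpNorm_of_ae_le_mul (Eventually.of_forall hug) 2
    have h2 : ENNReal.ofReal 7 * eLpNorm g 2 volume ≠ ⊤ :=
      ENNReal.mul_ne_top ENNReal.ofReal_ne_top hL2.2.ne
    calc (eLpNorm u 2 volume).toReal ≤ (ENNReal.ofReal 7 * eLpNorm g 2 volume).toReal :=
          ENNReal.toReal_mono h2 h1
      _ = 7 * A := by
          rw [hA, ENNReal.toReal_mul, ENNReal.toReal_ofReal (by norm_num : (0:ℝ) ≤ 7)]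
  have hVB : (eLpNorm v 2 volume).toReal ≤ 3 * B := by
    have hvb : ∀ x, ‖v x‖ ≤ 3 * ‖f x ^ 2 * deriv f x‖ := by
      intro x
      simp only [hv_def, norm_mul]
      gcongr
      simp
    have h1 : eLpNorm v 2 volume ≤
        ENNReal.ofReal 3 * eLpNorm (fun x => f x ^ 2 * deriv f x) 2 volume :=
      eLpNorm_le_mul_eLpNorm_of_ae_le_mul (Eventually.of_forall hvb) 2
    have h2 : ENNReal.ofReal 3 * eLpNorm (fun x => f x ^ 2 * deriv f x) 2 volume ≠ ⊤ :=
      ENNReal.mul_ne_top ENNReal.ofReal_ne_top hL2'.2.ne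
    calc (eLpNorm v 2 volume).toReal ≤
          (ENNReal.ofReal 3 * eLpNorm (fun x => f x ^ 2 * deriv f x) 2 volume).toReal :=
          ENNReal.toReal_mono h2 h1
      _ = 3 * B := by
          rw [hB, ENNReal.toReal_mul, ENNReal.toReal_ofReal (by norm_num : (0:ℝ) ≤ 3)]
  -- upper bound on φ x₀
  have hENN : 0 ≤ (eLpNorm u 2 volume).toReal := ENNReal.toReal_nonneg
  have hENNv : 0 ≤ (eLpNorm v 2 volume).toReal := ENNReal.toReal_nonneg
  have hφub : φ x₀ ≤ 21 * (A * B) := by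
    have h1 : φ x₀ ≤ (eLpNorm u 2 volume).toReal * (eLpNorm v 2 volume).toReal := by
      nlinarith
    calc φ x₀ ≤ (eLpNorm u 2 volume).toReal * (eLpNorm v 2 volume).toReal := h1
      _ ≤ (7 * A) * (3 * B) := by
          apply mul_le_mul hUA hVB hENNv (by linarith)
      _ = 21 * (A * B) := by ring
  -- lower bound: φ x₀ ≥ (7/8)² ‖g x₀‖²
  have hφlb : (7/8 : ℝ) ^ 2 * ‖g x₀‖ ^ 2 ≤ φ x₀ := by
    have h1 : φ x₀ = ‖u x₀‖ ^ 2 := by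
      rw [hφ_def, Complex.sq_norm]
    have h2 : ‖u x₀‖ = ‖g x₀‖ * ‖f x₀ ^ 2 + f x₀ + 1‖ := by
      rw [hufac x₀, norm_mul]
    have h3 : (7/8 : ℝ) * ‖g x₀‖ ≤ ‖u x₀‖ := by
      rw [h2]
      exact mul_le_mul_of_nonneg_right (hq_lower x₀) (norm_nonneg _) |>.trans_eq
        (mul_comm _ _)
    rw [h1]
    have := norm_nonneg (g x₀)
    nlinarith
  -- conclude
  have hg0 : ‖f x₀ - 1‖ = ‖g x₀‖ := rfl
  rw [hg0]
  have hAB : 0 ≤ A * B := mul_nonneg hA0 hB0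
  nlinarith [hφlb, hφub]
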